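/- For every positive integer m, the generalized robustness of entanglement of m copies of the singlet equals R_g((|ψ⁻⟩⟨ψ⁻|)^{⊗m}) = 2^m − 1, where the bipartition is Alice's m qubits versus Bob's m qubits. -/

import Mathlib

open scoped BigOperators Kronecker Matrix ComplexOrder
open Filter

noncomputable section

namespace QIT

/-- A density matrix: positive semidefinite with unit trace. -/
def IsDensityMatrix {n : Type} [Fintype n] [DecidableEq n] (ρ : Matrix n n ℂ) : Prop :=
  ρ.PosSemidef ∧ ρ.trace = 1

/-- Matrix logarithm base 2 via functional calculus (junk value `0` on
non-Hermitian input).  With the convention `Real.logb 2 0 = 0` this realizes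
the standard convention `0 · log 0 = 0` in entropic traces. -/
def matLog2 {n : Type} [Fintype n] [DecidableEq n] (A : Matrix n n ℂ) : Matrix n n ℂ :=
  if hA : A.IsHermitian then
    (hA.eigenvectorUnitary : Matrix n n ℂ) *
      Matrix.diagonal (fun i => (Real.logb 2 (hA.eigenvalues i) : ℂ)) *
      (star hA.eigenvectorUnitary : Matrix n n ℂ)
  else 0

/-- The von Neumann entropy `S(ρ) = -Tr(ρ log₂ ρ)`. -/
def vnEntropy {n : Type} [Fintype n] [DecidableEq n] (ρ : Matrix n n ℂ) : ℝ :=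
  -((ρ * matLog2 ρ).trace.re)

/-- The (finite part of the) quantum relative entropy
`S(ρ‖σ) = Tr(ρ log₂ ρ) - Tr(ρ log₂ σ)`. -/
def relEntVal {n : Type} [Fintype n] [DecidableEq n] (ρ σ : Matrix n n ℂ) : ℝ :=
  ((ρ * matLog2 ρ).trace.re) - ((ρ * matLog2 σ).trace.re)

/-- `SupportLE ρ σ` : the support of `ρ` is contained in the support of `σ`
(formulated as `ker σ ⊆ ker ρ`, which is equivalent for positive semidefinite
matrices); on this set the relative entropy is finite and given by `relEntVal`. -/
def SupportLE {n : Type} [Fintype n] [DecidableEq n] (ρ σ : Matrix n n ℂ) : Prop :=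
  ∀ v : n → ℂ, σ.mulVec v = 0 → ρ.mulVec v = 0

open Classical in
/-- Square root of a positive semidefinite matrix (junk value `0` otherwise). -/
def matSqrt {n : Type} [Fintype n] [DecidableEq n] (A : Matrix n n ℂ) : Matrix n n ℂ :=
  if hA : A.PosSemidef then
    (hA.1.eigenvectorUnitary : Matrix n n ℂ) *
      Matrix.diagonal (fun i => (Real.sqrt (hA.1.eigenvalues i) : ℂ)) *
      (star hA.1.eigenvectorUnitary : Matrix n n ℂ)
  else 0

/-- The trace norm `‖M‖₁ = Tr √(M†M)`. -/
def traceNorm {n : Type} [Fintype n] [DecidableEq n] (M : Matrix n n ℂ) : ℝ :=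
  (matSqrt (Mᴴ * M)).trace.re

/-- The fidelity `F(ρ,σ) = (Tr √(√ρ σ √ρ))²`. -/
def fidelity {n : Type} [Fintype n] [DecidableEq n] (ρ σ : Matrix n n ℂ) : ℝ :=
  ((matSqrt (matSqrt ρ * σ * matSqrt ρ)).trace.re) ^ 2

/-- `ψ` is a unit vector (pure state). -/
def PureState {n : Type} [Fintype n] (ψ : n → ℂ) : Prop :=
  ∑ x, ‖ψ x‖ ^ 2 = 1

/-- The rank-one projector `|ψ⟩⟨ψ|`. -/
def pureDM {n : Type} [Fintype n] (ψ : n → ℂ) : Matrix n n ℂ :=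
  Matrix.of fun x y => ψ x * star (ψ y)

section Bipartite

variable {nA nB mA mB : Type} [Fintype nA] [DecidableEq nA] [Fintype nB] [DecidableEq nB]
  [Fintype mA] [DecidableEq mA] [Fintype mB] [DecidableEq mB]

/-- Separability of a bipartite state on `H^A ⊗ H^B`: a convex combination of
tensor products of density matrices. -/
def IsSep (ρ : Matrix (nA × nB) (nA × nB) ℂ) : Prop :=
  ∃ (k : ℕ) (p : Fin k → ℝ) (α : Fin k → Matrix nA nA ℂ) (β : Fin k → Matrix nB nB ℂ),
    (∀ i, 0 ≤ p i) ∧ (∑ i, p i) = 1 ∧ (∀ i, IsDensityMatrix (α i)) ∧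
    (∀ i, IsDensityMatrix (β i)) ∧ ρ = ∑ i, (p i : ℂ) • (α i ⊗ₖ β i)

/-- The relative entropy of entanglement `E_r(ρ) = min_{σ separable} S(ρ‖σ)`
(the minimum over separable states; separable states whose support does not
contain that of `ρ` give `S(ρ‖σ) = +∞` and are excluded). -/
def Er (ρ : Matrix (nA × nB) (nA × nB) ℂ) : ℝ :=
  sInf {x : ℝ | ∃ σ, IsDensityMatrix σ ∧ IsSep σ ∧ SupportLE ρ σ ∧ x = relEntVal ρ σ}

/-- Partial trace over the second subsystem. -/
def ptraceB (ρ : Matrix (nA × nB) (nA × nB) ℂ) : Matrix nA nA ℂ :=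
  Matrix.of fun i j => ∑ k, ρ (i, k) (j, k)

/-- Partial trace over the first subsystem. -/
def ptraceA (ρ : Matrix (nA × nB) (nA × nB) ℂ) : Matrix nB nB ℂ :=
  Matrix.of fun i j => ∑ k, ρ (k, i) (k, j)

/-- `n`-fold tensor power of a bipartite state, with all `A`-factors grouped
together and all `B`-factors grouped together. -/
def kronPowBip (ρ : Matrix (nA × nB) (nA × nB) ℂ) (n : ℕ) :
    Matrix ((Fin n → nA) × (Fin n → nB)) ((Fin n → nA) × (Fin n → nB)) ℂ :=
  Matrix.of fun x y => ∏ t : Fin n, ρ (x.1 t, x.2 t) (y.1 t, y.2 t)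

/-- The regularized relative entropy of entanglement
`E_∞(ρ) = lim_n E_r(ρ^{⊗n})/n`. -/
def Einf (ρ : Matrix (nA × nB) (nA × nB) ℂ) : ℝ :=
  limUnder atTop (fun n : ℕ => Er (kronPowBip ρ n) / n)

end Bipartite

/-- A quantum operation: a completely positive trace-preserving linear map,
presented by a Kraus decomposition. -/
structure QuantumOp (n m : Type) [Fintype n] [DecidableEq n] [Fintype m] [DecidableEq m] where
  toFun : Matrix n n ℂ → Matrix m m ℂ
  cptp : ∃ (k : ℕ) (K : Fin k → Matrix m n ℂ),
    (∑ i, (K i)ᴴ * K i) = (1 : Matrix n n ℂ) ∧ ∀ ρ, toFun ρ = ∑ i, K i * ρ * (K i)ᴴ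

section BipartiteOps

variable {nA nB mA mB : Type} [Fintype nA] [DecidableEq nA] [Fintype nB] [DecidableEq nB]
  [Fintype mA] [DecidableEq mA] [Fintype mB] [DecidableEq mB]

/-- A quantum operation between bipartite systems is `ε`-entanglement-nonincreasing
if it increases the relative entropy of entanglement of any state by at most `ε`. -/
def BipEpsNI (Λ : QuantumOp (nA × nB) (mA × mB)) (ε : ℝ) : Prop :=
  ∀ ρ : Matrix (nA × nB) (nA × nB) ℂ, IsDensityMatrix ρ → Er (Λ.toFun ρ) - Er ρ ≤ ε

/-- `ρ` can be converted into `σ` at rate `r` by asymptotically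
entanglement-nonincreasing operations. -/
def BipAENConvertible (ρ : Matrix (nA × nB) (nA × nB) ℂ) (σ : Matrix (mA × mB) (mA × mB) ℂ)
    (r : ℝ) : Prop :=
  ∀ ε > (0 : ℝ), ∀ δ > (0 : ℝ), ∀ N : ℕ, ∃ n ≥ N,
    ∃ Λ : QuantumOp ((Fin n → nA) × (Fin n → nB))
        ((Fin ⌊r * (n : ℝ)⌋₊ → mA) × (Fin ⌊r * (n : ℝ)⌋₊ → mB)),
      BipEpsNI Λ ε ∧
      traceNorm (Λ.toFun (kronPowBip ρ n) - kronPowBip σ ⌊r * (n : ℝ)⌋₊) < δ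

/-- The optimal AEN conversion rate `R_AEN(ρ → σ)`. -/
def RAENbip (ρ : Matrix (nA × nB) (nA × nB) ℂ) (σ : Matrix (mA × mB) (mA × mB) ℂ) : ℝ :=
  sSup {r : ℝ | BipAENConvertible ρ σ r}

end BipartiteOps

/-- The singlet state vector `|ψ⁻⟩ = (|01⟩ - |10⟩)/√2`. -/
def singletVec : Fin 2 × Fin 2 → ℂ := fun x =>
  if x = (0, 1) then (Real.sqrt 2 : ℂ)⁻¹
  else if x = (1, 0) then -(Real.sqrt 2 : ℂ)⁻¹ else 0

/-- The singlet density matrix `|ψ⁻⟩⟨ψ⁻|`. -/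
def singletDM : Matrix (Fin 2 × Fin 2) (Fin 2 × Fin 2) ℂ := pureDM singletVec

/-- The generalized robustness of entanglement
`R_g(ρ) = min { s ≥ 0 : ∃ state σ, (ρ + sσ)/(1+s) separable }`. -/
def genRobustness {nA nB : Type} [Fintype nA] [DecidableEq nA] [Fintype nB] [DecidableEq nB]
    (ρ : Matrix (nA × nB) (nA × nB) ℂ) : ℝ :=
  sInf {s : ℝ | 0 ≤ s ∧ ∃ σ, IsDensityMatrix σ ∧
    IsSep ((1 + (s : ℂ))⁻¹ • (ρ + (s : ℂ) • σ))}


/-! ### Auxiliary material for `robustness_of_singlets` -/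

section Aux

open Matrix Finset

/-- bit flip on `Fin 2` -/
def bflip : Fin 2 → Fin 2 := fun b => if b = 0 then 1 else 0

/-- bit sign -/
def bsign : Fin 2 → ℂ := fun b => if b = 0 then 1 else -1

lemma bflip_bflip (b : Fin 2) : bflip (bflip b) = b := by
  fin_cases b <;> simp [bflip]

lemma bsign_bflip (b : Fin 2) : bsign (bflip b) = - bsign b := by
  fin_cases b <;> simp [bflip, bsign]

lemma bsign_mul_self (b : Fin 2) : bsign b * bsign b = 1 := by
  fin_cases b <;> simp [bsign]

lemma star_bsign (b : Fin 2) : star (bsign b) = bsign b := by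
  fin_cases b <;> simp [bsign]

variable {m : ℕ}

/-- coordinatewise flip -/
def flipv (x : Fin m → Fin 2) : Fin m → Fin 2 := fun t => bflip (x t)

/-- sign of a bit string -/
def sgv (x : Fin m → Fin 2) : ℂ := ∏ t, bsign (x t)

lemma flipv_flipv (x : Fin m → Fin 2) : flipv (flipv x) = x :=
  funext fun t => bflip_bflip (x t)

lemma flipv_inv : Function.Involutive (flipv (m := m)) := flipv_flipv

lemma sgv_mul_self (x : Fin m → Fin 2) : sgv x * sgv x = 1 := by
  rw [sgv, ← Finset.prod_mul_distrib]
  simp [bsign_mul_self]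

lemma star_sgv (x : Fin m → Fin 2) : star (sgv x) = sgv x := by
  rw [sgv, star_prod]
  exact Finset.prod_congr rfl fun t _ => star_bsign (x t)

lemma norm_sgv (x : Fin m → Fin 2) : ‖sgv x‖ = 1 := by
  rw [sgv, norm_prod]
  refine Finset.prod_eq_one fun t _ => ?_
  have : bsign (x t) = 1 ∨ bsign (x t) = -1 := by
    rw [bsign]; split <;> simp
  rcases this with h | h <;> rw [h] <;> simp

lemma sgv_flipv (x : Fin m → Fin 2) : sgv (flipv x) = (-1) ^ m * sgv x := by
  rw [sgv, sgv]
  calc ∏ t, bsign (flipv x t) = ∏ t, bsign (bflip (x t)) := rfl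
    _ = ∏ t, (-1) * bsign (x t) := by
        refine Finset.prod_congr rfl fun t _ => ?_
        rw [bsign_bflip]; ring
    _ = (-1) ^ m * ∏ t, bsign (x t) := by
        rw [Finset.prod_mul_distrib, Finset.prod_const]
        simp

lemma sgv_flipv_mul_sgv_flipv (x x' : Fin m → Fin 2) :
    sgv (flipv x) * sgv (flipv x') = sgv x * sgv x' := by
  rw [sgv_flipv, sgv_flipv]
  have h : ((-1:ℂ)) ^ m * ((-1:ℂ)) ^ m = 1 := by
    rw [← pow_add, ← two_mul, pow_mul]
    norm_num
  calc (-1:ℂ) ^ m * sgv x * ((-1) ^ m * sgv x')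
      = ((-1:ℂ) ^ m * (-1) ^ m) * (sgv x * sgv x') := by ring
    _ = sgv x * sgv x' := by rw [h, one_mul]
/-- the constant `(1/√2)^m` -/
def cC (m : ℕ) : ℂ := ((Real.sqrt 2 : ℂ))⁻¹ ^ m

lemma star_cC : star (cC m) = cC m := by
  rw [cC, star_pow, star_inv₀]
  norm_num

lemma cC_mul_cC : cC m * cC m = ((2:ℂ))⁻¹ ^ m := by
  rw [cC, ← mul_pow, ← mul_inv]
  congr 2
  rw [← Complex.ofReal_mul, Real.mul_self_sqrt (by norm_num)]
  norm_num

lemma singletVec_eq (a b : Fin 2) :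
    singletVec (a, b) = if b = bflip a then bsign a * (Real.sqrt 2 : ℂ)⁻¹ else 0 := by
  fin_cases a <;> fin_cases b <;>
    simp [singletVec, bflip, bsign, Prod.ext_iff]

/-- the `m`-fold singlet vector -/
def bigPsi (m : ℕ) : (Fin m → Fin 2) × (Fin m → Fin 2) → ℂ :=
  fun p => ∏ t, singletVec (p.1 t, p.2 t)

lemma kronPow_singlet_eq : kronPowBip singletDM m = pureDM (bigPsi m) := by
  ext ⟨x, y⟩ ⟨x', y'⟩
  simp only [kronPowBip, singletDM, pureDM, Matrix.of_apply, bigPsi]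
  rw [star_prod, ← Finset.prod_mul_distrib]

lemma bigPsi_eq (x y : Fin m → Fin 2) :
    bigPsi m (x, y) = if y = flipv x then cC m * sgv x else 0 := by
  by_cases h : y = flipv x
  · subst h
    rw [if_pos rfl, bigPsi]
    have : ∀ t : Fin m, singletVec (x t, flipv x t) = bsign (x t) * (Real.sqrt 2 : ℂ)⁻¹ := by
      intro t
      rw [singletVec_eq]
      exact if_pos rfl
    simp only [this]
    rw [Finset.prod_mul_distrib, Finset.prod_const, mul_comm, Finset.card_univ,
      Fintype.card_fin]
    rfl
  · rw [if_neg h, bigPsi]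
    have : ∃ t, y t ≠ bflip (x t) := by
      by_contra hc
      push_neg at hc
      exact h (funext hc)
    obtain ⟨t, ht⟩ := this
    refine Finset.prod_eq_zero (Finset.mem_univ t) ?_
    rw [singletVec_eq, if_neg ht]

lemma sum_conj_mul_bigPsi : ∑ u, star (bigPsi m u) * bigPsi m u = 1 := by
  rw [Fintype.sum_prod_type]
  have : ∀ x : Fin m → Fin 2, ∑ y, star (bigPsi m (x, y)) * bigPsi m (x, y)
      = ((2:ℂ))⁻¹ ^ m := by
    intro x
    rw [Finset.sum_eq_single (flipv x)]
    · rw [bigPsi_eq, if_pos rfl, star_mul', star_cC, star_sgv]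
      calc cC m * sgv x * (cC m * sgv x) = (cC m * cC m) * (sgv x * sgv x) := by ring
      _ = ((2:ℂ))⁻¹ ^ m := by rw [cC_mul_cC, sgv_mul_self, mul_one]
    · intro y _ hy
      rw [bigPsi_eq, if_neg hy, mul_zero]
    · intro h
      exact absurd (Finset.mem_univ _) h
  simp only [this]
  rw [Finset.sum_const, Finset.card_univ]
  have hcard : Fintype.card (Fin m → Fin 2) = 2 ^ m := by
    simp [Fintype.card_fun]
  rw [hcard, nsmul_eq_mul]
  push_cast
  rw [← mul_pow]
  norm_num
lemma pureDM_eq_conj {n : Type} [Fintype n] [DecidableEq n] (ψ : n → ℂ) :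
    pureDM ψ = (Matrix.of fun (_ : Unit) y => star (ψ y))ᴴ *
      (Matrix.of fun (_ : Unit) y => star (ψ y)) := by
  ext x y
  simp [pureDM, Matrix.mul_apply, Matrix.conjTranspose_apply, mul_comm]

lemma pureDM_posSemidef {n : Type} [Fintype n] [DecidableEq n] (ψ : n → ℂ) :
    (pureDM ψ).PosSemidef := by
  rw [pureDM_eq_conj]
  exact Matrix.posSemidef_conjTranspose_mul_self _

lemma trace_pureDM {n : Type} [Fintype n] [DecidableEq n] (ψ : n → ℂ) :
    (pureDM ψ).trace = ∑ x, star (ψ x) * ψ x := by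
  rw [Matrix.trace]
  refine Finset.sum_congr rfl fun x _ => ?_
  simp [pureDM, Matrix.diag_apply, mul_comm]

lemma pureDM_isDensity {n : Type} [Fintype n] [DecidableEq n] {ψ : n → ℂ}
    (hψ : ∑ x, star (ψ x) * ψ x = 1) : IsDensityMatrix (pureDM ψ) :=
  ⟨pureDM_posSemidef ψ, by rw [trace_pureDM, hψ]⟩

/-- unit vector criterion via norms -/
lemma sum_star_mul_eq_one {n : Type} [Fintype n] {ψ : n → ℂ}
    (h : ∑ x, ‖ψ x‖ ^ 2 = (1:ℝ)) : ∑ x, star (ψ x) * ψ x = (1:ℂ) := by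
  have : ∀ x, star (ψ x) * ψ x = ((‖ψ x‖ ^ 2 : ℝ) : ℂ) := by
    intro x
    rw [Complex.star_def, Complex.conj_mul']
    norm_num
  simp only [this]
  rw [← Complex.ofReal_sum, h, Complex.ofReal_one]

/-- Key inequality: `Re Tr(AB) ≤ Re Tr A * Re Tr B` for psd `A B`. -/
lemma trace_mul_re_le {n : Type} [Fintype n] [DecidableEq n] {A B : Matrix n n ℂ}
    (hA : A.PosSemidef) (hB : B.PosSemidef) :
    (A * B).trace.re ≤ A.trace.re * B.trace.re := by
  obtain ⟨C, rfl⟩ : ∃ C : Matrix n n ℂ, A = Cᴴ * C := by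
    open scoped MatrixOrder in
    obtain ⟨E, hE⟩ := CStarAlgebra.nonneg_iff_eq_star_mul_self.mp hA.nonneg
    exact ⟨E, hE⟩
  obtain ⟨D, rfl⟩ : ∃ D : Matrix n n ℂ, B = Dᴴ * D := by
    open scoped MatrixOrder in
    obtain ⟨E, hE⟩ := CStarAlgebra.nonneg_iff_eq_star_mul_self.mp hB.nonneg
    exact ⟨E, hE⟩
  have h1 : (Cᴴ * C * (Dᴴ * D)).trace = ((C * Dᴴ) * (C * Dᴴ)ᴴ).trace := by
    rw [Matrix.conjTranspose_mul, Matrix.conjTranspose_conjTranspose]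
    rw [show Cᴴ * C * (Dᴴ * D) = Cᴴ * (C * Dᴴ * D) by noncomm_ring]
    rw [Matrix.trace_mul_comm]
    noncomm_ring
  rw [h1]
  have htr : ∀ (M : Matrix n n ℂ), (M * Mᴴ).trace.re = ∑ i, ∑ j, ‖M i j‖ ^ 2 := by
    intro M
    rw [Matrix.trace]
    rw [Complex.re_sum]
    refine Finset.sum_congr rfl fun i _ => ?_
    rw [Matrix.diag_apply, Matrix.mul_apply, Complex.re_sum]
    refine Finset.sum_congr rfl fun j _ => ?_
    rw [Matrix.conjTranspose_apply]
    have : M i j * star (M i j) = ((‖M i j‖ ^ 2 : ℝ) : ℂ) := by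
      rw [Complex.star_def, Complex.mul_conj']
      push_cast
      ring
    rw [this, Complex.ofReal_re]
  have htrA : ∀ (M : Matrix n n ℂ), (Mᴴ * M).trace.re = ∑ i, ∑ j, ‖M i j‖ ^ 2 := by
    intro M
    rw [Matrix.trace_mul_comm]
    exact htr M
  rw [htr, htrA, htrA]
  calc ∑ i, ∑ j, ‖(C * Dᴴ) i j‖ ^ 2
      ≤ ∑ i, ∑ j, (∑ k, ‖C i k‖ ^ 2) * (∑ k, ‖D j k‖ ^ 2) := by
        refine Finset.sum_le_sum fun i _ => Finset.sum_le_sum fun j _ => ?_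
        have h2 : ‖(C * Dᴴ) i j‖ ≤ ∑ k, ‖C i k‖ * ‖D j k‖ := by
          rw [Matrix.mul_apply]
          refine (norm_sum_le _ _).trans ?_
          refine Finset.sum_le_sum fun k _ => ?_
          rw [norm_mul, Matrix.conjTranspose_apply, norm_star]
        have h3 : (∑ k, ‖C i k‖ * ‖D j k‖) ^ 2 ≤ (∑ k, ‖C i k‖ ^ 2) * (∑ k, ‖D j k‖ ^ 2) :=
          Finset.sum_mul_sq_le_sq_mul_sq _ _ _
        calc ‖(C * Dᴴ) i j‖ ^ 2 ≤ (∑ k, ‖C i k‖ * ‖D j k‖) ^ 2 :=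
              pow_le_pow_left₀ (norm_nonneg _) h2 2
          _ ≤ _ := h3
    _ = (∑ i, ∑ k, ‖C i k‖ ^ 2) * (∑ j, ∑ k, ‖D j k‖ ^ 2) := by
        rw [Finset.sum_mul_sum]
/-- quadratic form `⟨Ψ|T|Ψ⟩` with `Ψ` the `m`-fold singlet vector -/
def qf (m : ℕ) (T : Matrix ((Fin m → Fin 2) × (Fin m → Fin 2))
    ((Fin m → Fin 2) × (Fin m → Fin 2)) ℂ) : ℂ :=
  ∑ u, ∑ v, star (bigPsi m u) * T u v * bigPsi m v

lemma qf_nonneg {T : Matrix ((Fin m → Fin 2) × (Fin m → Fin 2))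
    ((Fin m → Fin 2) × (Fin m → Fin 2)) ℂ} (hT : T.PosSemidef) :
    0 ≤ (qf m T).re ∧ (qf m T).im = 0 := by
  have h := hT.dotProduct_mulVec_nonneg (bigPsi m)
  have heq : qf m T = dotProduct (star (bigPsi m)) (T.mulVec (bigPsi m)) := by
    rw [dotProduct]
    refine Finset.sum_congr rfl fun u _ => ?_
    rw [Matrix.mulVec, dotProduct, Finset.mul_sum]
    refine Finset.sum_congr rfl fun v _ => ?_
    simp [Pi.star_apply, mul_assoc]
  rw [heq]
  rw [Complex.le_def] at h
  simp only [Complex.zero_re, Complex.zero_im] at h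
  exact ⟨h.1, h.2.symm⟩

lemma qf_rho : qf m (pureDM (bigPsi m)) = 1 := by
  rw [qf]
  have : ∀ u v, star (bigPsi m u) * pureDM (bigPsi m) u v * bigPsi m v
      = (star (bigPsi m u) * bigPsi m u) * (star (bigPsi m v) * bigPsi m v) := by
    intro u v
    simp only [pureDM, Matrix.of_apply]
    ring
  simp only [this]
  rw [← Finset.sum_mul_sum]
  rw [sum_conj_mul_bigPsi, one_mul]

/-- the conjugated matrix `γ(β)` -/
def gma (β : Matrix (Fin m → Fin 2) (Fin m → Fin 2) ℂ) :
    Matrix (Fin m → Fin 2) (Fin m → Fin 2) ℂ :=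
  Matrix.of fun x' x => sgv x * sgv x' * β (flipv x) (flipv x')

lemma gma_posSemidef {β : Matrix (Fin m → Fin 2) (Fin m → Fin 2) ℂ}
    (hβ : β.PosSemidef) : (gma β).PosSemidef := by
  set M : Matrix (Fin m → Fin 2) (Fin m → Fin 2) ℂ :=
    Matrix.of fun y x => if y = flipv x then sgv x else 0 with hM
  have hstar : ∀ y x, star (M y x) = if y = flipv x then sgv x else 0 := by
    intro y x
    rw [hM]
    simp only [Matrix.of_apply, apply_ite star, star_sgv, star_zero]
  have key : gma β = (Mᴴ * β * M)ᵀ := by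
    ext x' x
    rw [Matrix.transpose_apply, Matrix.mul_apply]
    have h1 : ∀ y', (Mᴴ * β) x y' = sgv x * β (flipv x) y' := by
      intro y'
      rw [Matrix.mul_apply]
      have : ∀ y, Mᴴ x y * β y y' = if y = flipv x then sgv x * β y y' else 0 := by
        intro y
        rw [Matrix.conjTranspose_apply, hstar]
        split <;> simp
      rw [Finset.sum_congr rfl fun y _ => this y, Finset.sum_ite_eq' Finset.univ (flipv x),
        if_pos (Finset.mem_univ _)]
    have h2 : ∀ y', (Mᴴ * β) x y' * M y' x'
        = if y' = flipv x' then sgv x * β (flipv x) y' * sgv x' else 0 := by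
      intro y'
      rw [h1, hM]
      simp only [Matrix.of_apply]
      split <;> simp
    rw [Finset.sum_congr rfl fun y' _ => h2 y', Finset.sum_ite_eq' Finset.univ (flipv x'),
      if_pos (Finset.mem_univ _)]
    simp only [gma, Matrix.of_apply]
    ring
  rw [key]
  exact (hβ.conjTranspose_mul_mul_same M).transpose

lemma gma_trace {β : Matrix (Fin m → Fin 2) (Fin m → Fin 2) ℂ} :
    (gma β).trace = β.trace := by
  rw [Matrix.trace, Matrix.trace]
  have : ∀ x, (gma β).diag x = β.diag (flipv x) := by
    intro x
    simp only [Matrix.diag_apply, gma, Matrix.of_apply, sgv_mul_self, one_mul]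
  rw [Finset.sum_congr rfl fun x _ => this x]
  exact Equiv.sum_comp (flipv_inv.toPerm) (fun y => β.diag y)

lemma qf_kron (α β : Matrix (Fin m → Fin 2) (Fin m → Fin 2) ℂ) :
    qf m (α ⊗ₖ β) = ((2:ℂ))⁻¹ ^ m * (α * gma β).trace := by
  rw [qf, Fintype.sum_prod_type]
  have inner : ∀ x y, (∑ v, star (bigPsi m (x, y)) * (α ⊗ₖ β) (x, y) v * bigPsi m v)
      = if y = flipv x then
          ∑ x', (cC m * sgv x) * (α x x' * β (flipv x) (flipv x')) * (cC m * sgv x')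
        else 0 := by
    intro x y
    by_cases h : y = flipv x
    · subst h
      rw [if_pos rfl, Fintype.sum_prod_type]
      refine Finset.sum_congr rfl fun x' _ => ?_
      have hterm : ∀ y', star (bigPsi m (x, flipv x)) * (α ⊗ₖ β) (x, flipv x) (x', y') *
          bigPsi m (x', y')
          = if y' = flipv x' then
              (cC m * sgv x) * (α x x' * β (flipv x) (flipv x')) * (cC m * sgv x') else 0 := by
        intro y'
        rw [bigPsi_eq x' y', bigPsi_eq x (flipv x), if_pos rfl, star_mul', star_cC, star_sgv]
        by_cases hy : y' = flipv x'
        · subst hy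
          simp only [eq_self_iff_true, if_true, Matrix.kroneckerMap_apply]
          try ring
        · rw [if_neg hy, if_neg hy, mul_zero]
      rw [Finset.sum_congr rfl fun y' _ => hterm y', Finset.sum_ite_eq' Finset.univ (flipv x'),
        if_pos (Finset.mem_univ _)]
    · rw [if_neg h]
      refine Finset.sum_eq_zero fun v _ => ?_
      rw [show bigPsi m (x, y) = 0 from by rw [bigPsi_eq, if_neg h], star_zero, zero_mul,
        zero_mul]
  rw [Finset.sum_congr rfl fun x _ => Finset.sum_congr rfl fun y _ => inner x y]
  simp only [Finset.sum_ite_eq' Finset.univ, Finset.mem_univ, if_true]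
  rw [Matrix.trace, Finset.mul_sum]
  refine Finset.sum_congr rfl fun x _ => ?_
  rw [Matrix.diag_apply, Matrix.mul_apply, Finset.mul_sum]
  refine Finset.sum_congr rfl fun x' _ => ?_
  simp only [gma, Matrix.of_apply]
  have : cC m * sgv x * (α x x' * β (flipv x) (flipv x')) * (cC m * sgv x')
      = (cC m * cC m) * (α x x' * (sgv x * sgv x' * β (flipv x) (flipv x'))) := by ring
  rw [this, cC_mul_cC]
  try ring
lemma qf_smul (c : ℂ) (T : Matrix ((Fin m → Fin 2) × (Fin m → Fin 2))
    ((Fin m → Fin 2) × (Fin m → Fin 2)) ℂ) : qf m (c • T) = c * qf m T := by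
  rw [qf, qf, Finset.mul_sum]
  refine Finset.sum_congr rfl fun u _ => ?_
  rw [Finset.mul_sum]
  refine Finset.sum_congr rfl fun v _ => ?_
  simp only [Matrix.smul_apply, smul_eq_mul]
  ring

lemma qf_add (T S : Matrix ((Fin m → Fin 2) × (Fin m → Fin 2))
    ((Fin m → Fin 2) × (Fin m → Fin 2)) ℂ) : qf m (T + S) = qf m T + qf m S := by
  rw [qf, qf, qf, ← Finset.sum_add_distrib]
  refine Finset.sum_congr rfl fun u _ => ?_
  rw [← Finset.sum_add_distrib]
  refine Finset.sum_congr rfl fun v _ => ?_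
  simp only [Matrix.add_apply]
  ring

lemma qf_sum {k : ℕ} (T : Fin k → Matrix ((Fin m → Fin 2) × (Fin m → Fin 2))
    ((Fin m → Fin 2) × (Fin m → Fin 2)) ℂ) : qf m (∑ i, T i) = ∑ i, qf m (T i) := by
  induction k with
  | zero => simp [qf]
  | succ n ih =>
    rw [Fin.sum_univ_castSucc, qf_add, ih, Fin.sum_univ_castSucc (f := fun i => qf m (T i))]

lemma qf_kron_re_le {α β : Matrix (Fin m → Fin 2) (Fin m → Fin 2) ℂ}
    (hα : IsDensityMatrix α) (hβ : IsDensityMatrix β) :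
    (qf m (α ⊗ₖ β)).re ≤ ((2:ℝ))⁻¹ ^ m := by
  rw [qf_kron]
  have hc : ((2:ℂ))⁻¹ ^ m = ((((2:ℝ))⁻¹ ^ m : ℝ) : ℂ) := by push_cast; ring
  rw [hc]
  have hre : ∀ (r : ℝ) (z : ℂ), ((r : ℂ) * z).re = r * z.re := by
    intro r z
    rw [Complex.mul_re, Complex.ofReal_re, Complex.ofReal_im]
    ring
  rw [hre]
  have h1 : (α * gma β).trace.re ≤ 1 := by
    have := trace_mul_re_le hα.1 (gma_posSemidef hβ.1)
    rw [hα.2, gma_trace, hβ.2] at this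
    simpa using this
  have h2 : (0:ℝ) ≤ ((2:ℝ))⁻¹ ^ m := by positivity
  nlinarith

lemma lower_bound {s : ℝ} (hs0 : 0 ≤ s)
    {σ : Matrix ((Fin m → Fin 2) × (Fin m → Fin 2)) ((Fin m → Fin 2) × (Fin m → Fin 2)) ℂ}
    (hσ : IsDensityMatrix σ)
    (hsep : IsSep ((1 + (s:ℂ))⁻¹ • (pureDM (bigPsi m) + (s:ℂ) • σ))) :
    (2:ℝ) ^ m - 1 ≤ s := by
  obtain ⟨k, p, α, β, hp0, hp1, hα, hβ, heq⟩ := hsep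
  set T := (1 + (s:ℂ))⁻¹ • (pureDM (bigPsi m) + (s:ℂ) • σ) with hT
  obtain ⟨ht0, htim⟩ := qf_nonneg hσ.1
  set t : ℝ := (qf m σ).re with htdef
  have hqσ : qf m σ = (t : ℂ) := Complex.ext (by rw [Complex.ofReal_re]) (by
    rw [Complex.ofReal_im, htim])
  have q1 : qf m T = ((1 + s)⁻¹ * (1 + s * t) : ℝ) := by
    rw [hT, qf_smul, qf_add, qf_smul, qf_rho, hqσ]
    push_cast
    ring
  have q2 : (qf m T).re ≤ ((2:ℝ))⁻¹ ^ m := by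
    rw [heq, qf_sum]
    have hterm : ∀ i, qf m ((p i : ℂ) • (α i ⊗ₖ β i)) = (p i : ℂ) * qf m (α i ⊗ₖ β i) :=
      fun i => qf_smul _ _
    rw [Finset.sum_congr rfl fun i _ => hterm i, Complex.re_sum]
    have : ∀ i, ((p i : ℂ) * qf m (α i ⊗ₖ β i)).re ≤ p i * ((2:ℝ))⁻¹ ^ m := by
      intro i
      rw [Complex.mul_re, Complex.ofReal_re, Complex.ofReal_im]
      have := qf_kron_re_le (hα i) (hβ i)
      have hp := hp0 i
      nlinarith
    calc ∑ i, ((p i : ℂ) * qf m (α i ⊗ₖ β i)).re ≤ ∑ i, p i * ((2:ℝ))⁻¹ ^ m :=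
          Finset.sum_le_sum fun i _ => this i
      _ = ((2:ℝ))⁻¹ ^ m := by rw [← Finset.sum_mul, hp1, one_mul]
  rw [q1, Complex.ofReal_re] at q2
  have ha : (0:ℝ) < 1 + s := by linarith
  have hb : (0:ℝ) < 2 ^ m := by positivity
  have key : (1 + s)⁻¹ ≤ ((2:ℝ) ^ m)⁻¹ := by
    have h1 : (1:ℝ) ≤ 1 + s * t := by nlinarith
    have h2 : (1 + s)⁻¹ * 1 ≤ (1 + s)⁻¹ * (1 + s * t) := by
      apply mul_le_mul_of_nonneg_left h1
      positivity
    rw [mul_one] at h2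
    calc (1 + s)⁻¹ ≤ (1 + s)⁻¹ * (1 + s * t) := h2
      _ ≤ ((2:ℝ))⁻¹ ^ m := q2
      _ = ((2:ℝ) ^ m)⁻¹ := by rw [inv_pow]
  rw [← one_div, ← one_div, div_le_div_iff₀ ha hb] at key
  linarith
/-- the character `k ↦ i^k` of `ZMod 4` -/
def om (k : ZMod 4) : ℂ := Complex.I ^ k.val

lemma om_zero : om 0 = 1 := rfl

lemma I_pow_mod (n : ℕ) : Complex.I ^ (n % 4) = Complex.I ^ n := by
  conv_rhs => rw [← Nat.div_add_mod n 4]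
  rw [pow_add, pow_mul, Complex.I_pow_four, one_pow, one_mul]

lemma om_add (j k : ZMod 4) : om (j + k) = om j * om k := by
  rw [om, om, om, ZMod.val_add, I_pow_mod, pow_add]

lemma norm_om (k : ZMod 4) : ‖om k‖ = 1 := by
  rw [om, norm_pow, Complex.norm_I, one_pow]

lemma om_mul_star (k : ZMod 4) : om k * star (om k) = 1 := by
  rw [Complex.star_def, Complex.mul_conj']
  rw [norm_om]
  norm_num

lemma star_om (k : ZMod 4) : star (om k) = om (-k) := by
  have h1 : om k * om (-k) = 1 := by
    rw [← om_add, add_neg_cancel, om_zero]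
  have hne : om k ≠ 0 := by
    intro h
    rw [h, zero_mul] at h1
    exact zero_ne_one h1
  exact mul_left_cancel₀ hne ((om_mul_star k).trans h1.symm)

lemma om_mul_sum (c : ZMod 4) :
    ∑ j : ZMod 4, om (c * j) = if c = 0 then 4 else 0 := by
  have huniv : (Finset.univ : Finset (ZMod 4)) = {0, 1, 2, 3} := by decide
  rw [huniv, Finset.sum_insert (by decide), Finset.sum_insert (by decide),
    Finset.sum_insert (by decide), Finset.sum_singleton]
  have hI2 : Complex.I ^ 2 = -1 := Complex.I_sq
  have hI3 : Complex.I ^ 3 = -Complex.I := by rw [pow_succ, hI2]; ring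
  have hc : c = 0 ∨ c = 1 ∨ c = 2 ∨ c = 3 := by revert c; decide
  have v1 : ZMod.val (1 : ZMod 4) = 1 := by decide
  have v2 : ZMod.val (2 : ZMod 4) = 2 := by decide
  have v3 : ZMod.val (3 : ZMod 4) = 3 := by decide
  have v4 : ZMod.val (4 : ZMod 4) = 0 := by decide
  have v6 : ZMod.val (6 : ZMod 4) = 2 := by decide
  have v9 : ZMod.val (9 : ZMod 4) = 1 := by decide
  rcases hc with rfl | rfl | rfl | rfl
  · rw [if_pos rfl]; simp only [om]; norm_num
  · rw [if_neg (by decide)]; simp only [om]; norm_num [v1, v2, v3, hI2, hI3]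
  · rw [if_neg (by decide)]; simp only [om]; norm_num [v2, v4, v6, hI2, hI3]
  · rw [if_neg (by decide)]; simp only [om]; norm_num [v3, v6, v9, hI2, hI3]

lemma om_finset_sum {ι : Type} (s : Finset ι) (f : ι → ZMod 4) :
    om (∑ i ∈ s, f i) = ∏ i ∈ s, om (f i) := by
  induction s using Finset.cons_induction with
  | empty => simp [om_zero]
  | cons a s ha ih => rw [Finset.sum_cons, Finset.prod_cons, om_add, ih]
/-- Alice's product-decomposition vectors -/
def uA (a : (Fin m → Fin 2) → ZMod 4) : (Fin m → Fin 2) → ℂ := fun x => cC m * om (a x)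

/-- Bob's product-decomposition vectors -/
def vB (a : (Fin m → Fin 2) → ZMod 4) : (Fin m → Fin 2) → ℂ :=
  fun y => sgv y * cC m * star (om (a (flipv y)))

/-- standard basis vectors -/
def eV (z : Fin m → Fin 2) : (Fin m → Fin 2) → ℂ := fun x => if x = z then 1 else 0

lemma card_smul_aux : ((Fintype.card (Fin m → Fin 2)) : ℂ) * ((2:ℂ))⁻¹ ^ m = 1 := by
  rw [Fintype.card_fun, Fintype.card_fin, Fintype.card_fin]
  push_cast
  rw [← mul_pow]
  norm_num

lemma uA_unit (a : (Fin m → Fin 2) → ZMod 4) : ∑ x, star (uA a x) * uA a x = (1:ℂ) := by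
  have : ∀ x, star (uA a x) * uA a x = ((2:ℂ))⁻¹ ^ m := by
    intro x
    rw [uA, star_mul', star_cC]
    calc cC m * star (om (a x)) * (cC m * om (a x))
        = (cC m * cC m) * (om (a x) * star (om (a x))) := by ring
      _ = ((2:ℂ))⁻¹ ^ m := by rw [cC_mul_cC, om_mul_star, mul_one]
  rw [Finset.sum_congr rfl fun x _ => this x, Finset.sum_const, Finset.card_univ,
    nsmul_eq_mul, card_smul_aux]

lemma vB_unit (a : (Fin m → Fin 2) → ZMod 4) : ∑ y, star (vB a y) * vB a y = (1:ℂ) := by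
  have : ∀ y, star (vB a y) * vB a y = ((2:ℂ))⁻¹ ^ m := by
    intro y
    rw [vB, star_mul', star_mul', star_cC, star_sgv, star_star]
    calc sgv y * cC m * om (a (flipv y)) * (sgv y * cC m * star (om (a (flipv y))))
        = (cC m * cC m) * (sgv y * sgv y) * (om (a (flipv y)) * star (om (a (flipv y)))) := by
          ring
      _ = ((2:ℂ))⁻¹ ^ m := by
          rw [cC_mul_cC, sgv_mul_self, om_mul_star, mul_one, mul_one]
  rw [Finset.sum_congr rfl fun y _ => this y, Finset.sum_const, Finset.card_univ,
    nsmul_eq_mul, card_smul_aux]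

lemma eV_unit (z : Fin m → Fin 2) : ∑ x, star (eV z x) * eV z x = (1:ℂ) := by
  have : ∀ x, star (eV z x) * eV z x = if x = z then (1:ℂ) else 0 := by
    intro x
    rw [eV]
    split <;> simp
  rw [Finset.sum_congr rfl fun x _ => this x, Finset.sum_ite_eq' Finset.univ z,
    if_pos (Finset.mem_univ _)]

/-- support condition for the character sum -/
lemma charsum (x y x' y' : Fin m → Fin 2) :
    ∑ a : (Fin m → Fin 2) → ZMod 4,
      om (a x) * star (om (a x')) * star (om (a (flipv y))) * om (a (flipv y'))
    = if ((x = x' ∧ y = y') ∨ (x = flipv y ∧ x' = flipv y'))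
      then ((4:ℂ) ^ (Fintype.card (Fin m → Fin 2))) else 0 := by
  set c : (Fin m → Fin 2) → ZMod 4 := fun z =>
    ((if z = x then 1 else 0) + (if z = flipv y' then 1 else 0))
      - ((if z = x' then 1 else 0) + (if z = flipv y then 1 else 0)) with hc
  have h1 : ∀ a : (Fin m → Fin 2) → ZMod 4,
      om (a x) * star (om (a x')) * star (om (a (flipv y))) * om (a (flipv y'))
      = ∏ z, om (c z * a z) := by
    intro a
    rw [star_om, star_om, ← om_add, ← om_add, ← om_add, ← om_finset_sum]
    congr 1
    have expand : ∀ z, c z * a z =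
        ((if z = x then 1 else 0) * a z + (if z = flipv y' then 1 else 0) * a z)
          - ((if z = x' then 1 else 0) * a z + (if z = flipv y then 1 else 0) * a z) := by
      intro z
      rw [hc]
      ring
    rw [Finset.sum_congr rfl fun z _ => expand z, Finset.sum_sub_distrib,
      Finset.sum_add_distrib, Finset.sum_add_distrib]
    have collapse : ∀ w : Fin m → Fin 2,
        ∑ z, (if z = w then (1:ZMod 4) else 0) * a z = a w := by
      intro w
      have : ∀ z, (if z = w then (1:ZMod 4) else 0) * a z = if z = w then a z else 0 := by
        intro z; split <;> simp
      rw [Finset.sum_congr rfl fun z _ => this z, Finset.sum_ite_eq' Finset.univ w,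
        if_pos (Finset.mem_univ _)]
    rw [collapse, collapse, collapse, collapse]
    abel
  rw [Finset.sum_congr rfl fun a _ => h1 a]
  have h2 : ∑ a : (Fin m → Fin 2) → ZMod 4, ∏ z, om (c z * a z)
      = ∏ z, ∑ j : ZMod 4, om (c z * j) := by
    rw [Finset.prod_univ_sum, Fintype.piFinset_univ]
  rw [h2, Finset.prod_congr rfl fun z _ => om_mul_sum (c z)]
  -- characterize vanishing
  have hzero : (∀ z, c z = 0) ↔ ((x = x' ∧ y = y') ∨ (x = flipv y ∧ x' = flipv y')) := by
    have hiff : ∀ z, c z = 0 ↔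
        ((if z = x then (1:ℕ) else 0) + (if z = flipv y' then 1 else 0)
          = (if z = x' then 1 else 0) + (if z = flipv y then 1 else 0)) := by
      intro z
      rw [hc]
      constructor
      · intro h
        have h' : ((if z = x then (1:ZMod 4) else 0) + (if z = flipv y' then 1 else 0))
            = ((if z = x' then 1 else 0) + (if z = flipv y then 1 else 0)) := by
          rwa [sub_eq_zero] at h
        have hcast : ∀ (P : Prop) [Decidable P],
            (if P then (1:ZMod 4) else 0) = (((if P then (1:ℕ) else 0) : ℕ) : ZMod 4) := by
          intro P _; split <;> simp
        rw [hcast, hcast, hcast, hcast, ← Nat.cast_add, ← Nat.cast_add,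
          ZMod.natCast_eq_natCast_iff] at h'
        have hb1 : (if z = x then (1:ℕ) else 0) + (if z = flipv y' then 1 else 0) ≤ 2 := by
          split_ifs <;> omega
        have hb2 : (if z = x' then (1:ℕ) else 0) + (if z = flipv y then 1 else 0) ≤ 2 := by
          split_ifs <;> omega
        have := h'
        rw [Nat.ModEq] at this
        omega
      · intro h
        have : ((if z = x then (1:ZMod 4) else 0) + (if z = flipv y' then 1 else 0))
            = ((if z = x' then 1 else 0) + (if z = flipv y then 1 else 0)) := by
          have hcast : ∀ (P : Prop) [Decidable P],
              (if P then (1:ZMod 4) else 0) = (((if P then (1:ℕ) else 0) : ℕ) : ZMod 4) := by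
            intro P _; split <;> simp
          rw [hcast, hcast, hcast, hcast, ← Nat.cast_add, ← Nat.cast_add, h]
        show (((if z = x then (1:ZMod 4) else 0) + (if z = flipv y' then 1 else 0))
          - ((if z = x' then (1:ZMod 4) else 0) + (if z = flipv y then 1 else 0))) = 0
        rw [this, sub_self]
    constructor
    · intro h
      by_cases hxx : x = x'
      · left
        refine ⟨hxx, ?_⟩
        have hz := (hiff (flipv y)).mp (h (flipv y))
        rw [if_pos rfl, ← hxx] at hz
        have hfy : flipv y = flipv y' := by
          by_contra hne
          rw [if_neg hne] at hz
          split_ifs at hz <;> omega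
        have := congrArg flipv hfy
        rwa [flipv_flipv, flipv_flipv] at this
      · right
        have hz1 := (hiff x).mp (h x)
        rw [if_pos rfl, if_neg hxx] at hz1
        have hxfy : x = flipv y := by
          by_contra hne
          rw [if_neg hne] at hz1
          split_ifs at hz1 <;> omega
        refine ⟨hxfy, ?_⟩
        have hz2 := (hiff x').mp (h x')
        rw [if_pos rfl, if_neg (fun hh => hxx hh.symm)] at hz2
        by_contra hne
        rw [if_neg hne] at hz2
        split_ifs at hz2 <;> omega
    · intro h z
      rw [hiff z]
      rcases h with ⟨rfl, rfl⟩ | ⟨hxy, hxy'⟩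
      · rfl
      · rw [hxy, hxy']
        ring
  by_cases hC : ((x = x' ∧ y = y') ∨ (x = flipv y ∧ x' = flipv y'))
  · rw [if_pos hC]
    have : ∀ z : Fin m → Fin 2, (if c z = 0 then (4:ℂ) else 0) = 4 := by
      intro z
      rw [if_pos (hzero.mpr hC z)]
    rw [Finset.prod_congr rfl fun z _ => this z, Finset.prod_const, Finset.card_univ]
  · rw [if_neg hC]
    have : ∃ z, c z ≠ 0 := by
      by_contra hno
      push_neg at hno
      exact hC (hzero.mp hno)
    obtain ⟨z0, hz0⟩ := this
    refine Finset.prod_eq_zero (Finset.mem_univ z0) ?_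
    rw [if_neg hz0]
lemma flip_eq_comm (u v : Fin m → Fin 2) : u = flipv v ↔ v = flipv u := by
  constructor <;> (intro h; rw [h, flipv_flipv])

lemma rho_entry (x y x' y' : Fin m → Fin 2) :
    pureDM (bigPsi m) (x,y) (x',y')
      = if (y = flipv x ∧ y' = flipv x') then ((2:ℂ))⁻¹ ^ m * (sgv x * sgv x') else 0 := by
  show bigPsi m (x, y) * star (bigPsi m (x', y')) = _
  rw [bigPsi_eq, bigPsi_eq]
  by_cases h1 : y = flipv x <;> by_cases h2 : y' = flipv x'
  · rw [if_pos h1, if_pos h2, if_pos ⟨h1, h2⟩, star_mul', star_cC, star_sgv, ← cC_mul_cC]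
    ring
  · rw [if_pos h1, if_neg h2, if_neg (fun h => h2 h.2), star_zero, mul_zero]
  · rw [if_neg h1, if_pos h2, if_neg (fun h => h1 h.1), zero_mul]
  · rw [if_neg h1, if_neg h2, if_neg (fun h => h1 h.1), zero_mul]

lemma esum_entry (x y x' y' : Fin m → Fin 2) :
    ∑ z, (pureDM (eV z) ⊗ₖ pureDM (eV (flipv z))) (x,y) (x',y')
      = if (x' = x ∧ y = flipv x ∧ y' = flipv x) then 1 else 0 := by
  have hterm : ∀ z, (pureDM (eV z) ⊗ₖ pureDM (eV (flipv z))) (x,y) (x',y')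
      = if z = x then (if (x' = x ∧ y = flipv x ∧ y' = flipv x) then 1 else 0) else 0 := by
    intro z
    simp only [Matrix.kroneckerMap_apply, pureDM, Matrix.of_apply, eV, apply_ite star,
      star_one, star_zero]
    by_cases hzx : z = x
    · subst hzx
      rw [if_pos rfl, if_pos rfl]
      by_cases h1 : x' = z <;> by_cases h2 : y = flipv z <;> by_cases h3 : y' = flipv z <;>
        simp [h1, h2, h3]
    · rw [if_neg hzx, if_neg (fun h => hzx h.symm), zero_mul, zero_mul]
  rw [Finset.sum_congr rfl fun z _ => hterm z]
  rw [Finset.sum_ite_eq' Finset.univ x _, if_pos (Finset.mem_univ _)]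

lemma asum_entry (x y x' y' : Fin m → Fin 2) :
    ∑ a : (Fin m → Fin 2) → ZMod 4,
      (pureDM (uA a) ⊗ₖ pureDM (vB a)) (x,y) (x',y')
      = (((2:ℂ))⁻¹ ^ m * ((2:ℂ))⁻¹ ^ m) * (sgv y * sgv y') *
        (if ((x = x' ∧ y = y') ∨ (x = flipv y ∧ x' = flipv y'))
          then ((4:ℂ) ^ (Fintype.card (Fin m → Fin 2))) else 0) := by
  have hterm : ∀ a : (Fin m → Fin 2) → ZMod 4,
      (pureDM (uA a) ⊗ₖ pureDM (vB a)) (x,y) (x',y')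
      = ((cC m * cC m) * (cC m * cC m)) * (sgv y * sgv y') *
        (om (a x) * star (om (a x')) * star (om (a (flipv y))) * om (a (flipv y'))) := by
    intro a
    simp only [Matrix.kroneckerMap_apply, pureDM, Matrix.of_apply, uA, vB, star_mul',
      star_cC, star_sgv, star_star]
    ring
  rw [Finset.sum_congr rfl fun a _ => hterm a, ← Finset.mul_sum, charsum, cC_mul_cC]

/-- The key separability identity. -/
lemma key_identity :
    (1 : Matrix ((Fin m → Fin 2) × (Fin m → Fin 2)) ((Fin m → Fin 2) × (Fin m → Fin 2)) ℂ)
      + ((2:ℂ) ^ m) • pureDM (bigPsi m)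
    = (∑ a : (Fin m → Fin 2) → ZMod 4,
        (((2:ℂ) ^ m) ^ 2 * (((4:ℂ) ^ (Fintype.card (Fin m → Fin 2)))⁻¹)) •
          (pureDM (uA a) ⊗ₖ pureDM (vB a)))
      + ∑ z, pureDM (eV z) ⊗ₖ pureDM (eV (flipv z)) := by
  ext ⟨x, y⟩ ⟨x', y'⟩
  rw [Matrix.add_apply, Matrix.add_apply, Matrix.smul_apply, Matrix.sum_apply,
    Matrix.sum_apply]
  simp only [Matrix.smul_apply, smul_eq_mul]
  rw [← Finset.mul_sum, asum_entry, esum_entry, rho_entry, Matrix.one_apply]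
  have h2m : (2:ℂ) ^ m ≠ 0 := by positivity
  have h4c : (4:ℂ) ^ (Fintype.card (Fin m → Fin 2)) ≠ 0 := by positivity
  have hw : ((2:ℂ) ^ m) ^ 2 * (((4:ℂ) ^ (Fintype.card (Fin m → Fin 2)))⁻¹) *
      ((((2:ℂ))⁻¹ ^ m * ((2:ℂ))⁻¹ ^ m) * (4:ℂ) ^ (Fintype.card (Fin m → Fin 2))) = 1 := by
    field_simp
    rw [one_div, inv_pow, ← mul_pow, mul_inv_cancel₀ h2m, one_pow]
  have hpow : (2:ℂ) ^ m * ((2:ℂ))⁻¹ ^ m = 1 := by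
    rw [← mul_pow]
    norm_num
  -- reduce the prod-equality in the `1` entry
  simp only [Prod.mk.injEq]
  by_cases h1 : x = x' <;> by_cases h2 : y = y' <;> by_cases h3 : y = flipv x <;>
      by_cases h4 : y' = flipv x'
  · rw [if_pos ⟨h1, h2⟩, if_pos ⟨h3, h4⟩, if_pos (Or.inl ⟨h1, h2⟩), if_pos ⟨h1.symm, h3, h4.trans (congrArg flipv h1).symm⟩]
    rw [show sgv y * sgv y' = sgv x * sgv x' from by rw [h3, h4]; exact sgv_flipv_mul_sgv_flipv x x']
    linear_combination (sgv x * sgv x') * hpow - (sgv x * sgv x') * hw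
  · exact absurd ((h2.symm.trans h3).trans (congrArg flipv h1)) h4
  · exact absurd ((h2.trans h4).trans (congrArg flipv h1).symm) h3
  · rw [if_pos ⟨h1, h2⟩, if_neg (fun hC => h3 hC.1), if_pos (Or.inl ⟨h1, h2⟩), if_neg (fun hC => h3 hC.2.1)]
    rw [← h2, sgv_mul_self]
    linear_combination -hw
  · exact absurd ((h3.trans (congrArg flipv h1)).trans h4.symm) h2
  · rw [if_neg (fun hC => h2 hC.2), if_neg (fun hC => h4 hC.2), if_neg (fun hC => hC.elim (fun hc => h2 hc.2) (fun hc => h4 ((flip_eq_comm x' y').mp hc.2))), if_neg (fun hC => h4 (hC.2.2.trans (congrArg flipv h1)))]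
    ring
  · rw [if_neg (fun hC => h2 hC.2), if_neg (fun hC => h3 hC.1), if_neg (fun hC => hC.elim (fun hc => h2 hc.2) (fun hc => h3 ((flip_eq_comm x y).mp hc.1))), if_neg (fun hC => h3 hC.2.1)]
    ring
  · rw [if_neg (fun hC => h2 hC.2), if_neg (fun hC => h3 hC.1), if_neg (fun hC => hC.elim (fun hc => h2 hc.2) (fun hc => h3 ((flip_eq_comm x y).mp hc.1))), if_neg (fun hC => h3 hC.2.1)]
    ring
  · rw [if_neg (fun hC => h1 hC.1), if_pos ⟨h3, h4⟩, if_pos (Or.inr ⟨(flip_eq_comm x y).mpr h3, (flip_eq_comm x' y').mpr h4⟩), if_neg (fun hC => h1 hC.1.symm)]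
    rw [show sgv y * sgv y' = sgv x * sgv x' from by rw [h3, h4]; exact sgv_flipv_mul_sgv_flipv x x']
    linear_combination (sgv x * sgv x') * hpow - (sgv x * sgv x') * hw
  · rw [if_neg (fun hC => h1 hC.1), if_neg (fun hC => h4 hC.2), if_neg (fun hC => hC.elim (fun hc => h1 hc.1) (fun hc => h4 ((flip_eq_comm x' y').mp hc.2))), if_neg (fun hC => h1 hC.1.symm)]
    ring
  · rw [if_neg (fun hC => h1 hC.1), if_neg (fun hC => h3 hC.1), if_neg (fun hC => hC.elim (fun hc => h1 hc.1) (fun hc => h3 ((flip_eq_comm x y).mp hc.1))), if_neg (fun hC => h1 hC.1.symm)]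
    ring
  · rw [if_neg (fun hC => h1 hC.1), if_neg (fun hC => h3 hC.1), if_neg (fun hC => hC.elim (fun hc => h1 hc.1) (fun hc => h3 ((flip_eq_comm x y).mp hc.1))), if_neg (fun hC => h1 hC.1.symm)]
    ring
  · rw [if_neg (fun hC => h1 hC.1), if_pos ⟨h3, h4⟩, if_pos (Or.inr ⟨(flip_eq_comm x y).mpr h3, (flip_eq_comm x' y').mpr h4⟩), if_neg (fun hC => h1 hC.1.symm)]
    rw [show sgv y * sgv y' = sgv x * sgv x' from by rw [h3, h4]; exact sgv_flipv_mul_sgv_flipv x x']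
    linear_combination (sgv x * sgv x') * hpow - (sgv x * sgv x') * hw
  · rw [if_neg (fun hC => h1 hC.1), if_neg (fun hC => h4 hC.2), if_neg (fun hC => hC.elim (fun hc => h1 hc.1) (fun hc => h4 ((flip_eq_comm x' y').mp hc.2))), if_neg (fun hC => h1 hC.1.symm)]
    ring
  · rw [if_neg (fun hC => h1 hC.1), if_neg (fun hC => h3 hC.1), if_neg (fun hC => hC.elim (fun hc => h1 hc.1) (fun hc => h3 ((flip_eq_comm x y).mp hc.1))), if_neg (fun hC => h1 hC.1.symm)]
    ring
  · rw [if_neg (fun hC => h1 hC.1), if_neg (fun hC => h3 hC.1), if_neg (fun hC => hC.elim (fun hc => h1 hc.1) (fun hc => h3 ((flip_eq_comm x y).mp hc.1))), if_neg (fun hC => h1 hC.1.symm)]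
    ring
lemma pureDM_conjTranspose {n : Type} [Fintype n] [DecidableEq n] (ψ : n → ℂ) :
    (pureDM ψ)ᴴ = pureDM ψ := by
  ext x y
  simp [pureDM, Matrix.conjTranspose_apply, mul_comm]

lemma pureDM_proj {n : Type} [Fintype n] [DecidableEq n] {ψ : n → ℂ}
    (h : ∑ x, star (ψ x) * ψ x = 1) : pureDM ψ * pureDM ψ = pureDM ψ := by
  ext x y
  rw [Matrix.mul_apply]
  have : ∀ v, pureDM ψ x v * pureDM ψ v y = (ψ x * star (ψ y)) * (star (ψ v) * ψ v) := by
    intro v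
    simp only [pureDM, Matrix.of_apply]
    ring
  rw [Finset.sum_congr rfl fun v _ => this v, ← Finset.mul_sum, h, mul_one]
  rfl

lemma one_sub_pureDM_psd {n : Type} [Fintype n] [DecidableEq n] {ψ : n → ℂ}
    (h : ∑ x, star (ψ x) * ψ x = 1) : ((1 : Matrix n n ℂ) - pureDM ψ).PosSemidef := by
  have key : (1 : Matrix n n ℂ) - pureDM ψ
      = ((1 : Matrix n n ℂ) - pureDM ψ)ᴴ * ((1 : Matrix n n ℂ) - pureDM ψ) := by
    rw [Matrix.conjTranspose_sub, Matrix.conjTranspose_one, pureDM_conjTranspose,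
      Matrix.sub_mul, Matrix.mul_sub, Matrix.mul_sub, Matrix.one_mul, Matrix.mul_one,
      pureDM_proj h]
    rw [Matrix.one_mul]
    abel
  rw [key]
  exact Matrix.posSemidef_conjTranspose_mul_self _

lemma smul_psd {n : Type} [Fintype n] [DecidableEq n] {c : ℝ} (hc : 0 ≤ c)
    {A : Matrix n n ℂ} (hA : A.PosSemidef) : (((c:ℝ):ℂ) • A).PosSemidef := by
  constructor
  · rw [Matrix.IsHermitian, Matrix.conjTranspose_smul, Complex.star_def,
      Complex.conj_ofReal, hA.1]
  · intro v
    exact (hA.smul (a := (c:ℂ)) (by exact_mod_cast hc)).2 v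

section FinalAssembly

variable {m : ℕ}

lemma two_pow_le (hm : 1 ≤ m) : (2:ℝ) ≤ 2 ^ m := by
  calc (2:ℝ) = 2 ^ 1 := (pow_one 2).symm
    _ ≤ 2 ^ m := pow_le_pow_right₀ (by norm_num) hm

/-- the mixing state `σ` -/
def sigmix (m : ℕ) : Matrix ((Fin m → Fin 2) × (Fin m → Fin 2))
    ((Fin m → Fin 2) × (Fin m → Fin 2)) ℂ :=
  (((((2:ℝ) ^ m) ^ 2 - 1)⁻¹ : ℝ) : ℂ) • ((1 : Matrix _ _ ℂ) - pureDM (bigPsi m))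

lemma trace_one_sub_rho :
    ((1 : Matrix ((Fin m → Fin 2) × (Fin m → Fin 2))
      ((Fin m → Fin 2) × (Fin m → Fin 2)) ℂ) - pureDM (bigPsi m)).trace
      = ((2:ℂ) ^ m) ^ 2 - 1 := by
  rw [Matrix.trace_sub, Matrix.trace_one, trace_pureDM, sum_conj_mul_bigPsi]
  congr 1
  rw [Fintype.card_prod, Fintype.card_fun, Fintype.card_fin, Fintype.card_fin]
  push_cast
  ring

lemma sigmix_density (hm : 1 ≤ m) : IsDensityMatrix (sigmix m) := by
  have h2 : (2:ℝ) ≤ 2 ^ m := two_pow_le hm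
  have hpos : (0:ℝ) < ((2:ℝ) ^ m) ^ 2 - 1 := by nlinarith
  constructor
  · exact smul_psd (le_of_lt (inv_pos.mpr hpos)) (one_sub_pureDM_psd sum_conj_mul_bigPsi)
  · rw [sigmix, Matrix.trace_smul, trace_one_sub_rho, smul_eq_mul]
    have hcast : (((((2:ℝ) ^ m) ^ 2 - 1)⁻¹ : ℝ) : ℂ) = (((2:ℂ) ^ m) ^ 2 - 1)⁻¹ := by
      push_cast
      ring
    rw [hcast]
    have hne : ((2:ℂ) ^ m) ^ 2 - 1 ≠ 0 := by
      intro hzero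
      have hc2 : ((((2:ℝ) ^ m) ^ 2 - 1 : ℝ) : ℂ) = ((2:ℂ) ^ m) ^ 2 - 1 := by push_cast; ring
      rw [← hc2, Complex.ofReal_eq_zero] at hzero
      linarith
    exact inv_mul_cancel₀ hne
lemma cast_d_facts (hm : 1 ≤ m) :
    (2:ℂ) ^ m ≠ 0 ∧ (2:ℂ) ^ m + 1 ≠ 0 ∧ (2:ℂ) ^ m - 1 ≠ 0 := by
  have h2 : (2:ℝ) ≤ 2 ^ m := two_pow_le hm
  refine ⟨by positivity, ?_, ?_⟩
  · intro h
    have : (((2:ℝ) ^ m + 1 : ℝ) : ℂ) = 0 := by push_cast; exact h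
    rw [Complex.ofReal_eq_zero] at this
    linarith
  · intro h
    have : (((2:ℝ) ^ m - 1 : ℝ) : ℂ) = 0 := by push_cast; exact h
    rw [Complex.ofReal_eq_zero] at this
    linarith

lemma tau_eq (hm : 1 ≤ m) :
    (1 + (((2:ℝ) ^ m - 1 : ℝ) : ℂ))⁻¹ •
        (pureDM (bigPsi m) + (((2:ℝ) ^ m - 1 : ℝ) : ℂ) • sigmix m)
      = ((2:ℂ) ^ m * ((2:ℂ) ^ m + 1))⁻¹ •
        ((1 : Matrix ((Fin m → Fin 2) × (Fin m → Fin 2))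
          ((Fin m → Fin 2) × (Fin m → Fin 2)) ℂ) + ((2:ℂ) ^ m) • pureDM (bigPsi m)) := by
  obtain ⟨hd0, hd1, hdm1⟩ := cast_d_facts (m := m) hm
  have hs : (((2:ℝ) ^ m - 1 : ℝ) : ℂ) = (2:ℂ) ^ m - 1 := by push_cast; ring
  have hw : (((((2:ℝ) ^ m) ^ 2 - 1)⁻¹ : ℝ) : ℂ) = (((2:ℂ) ^ m) ^ 2 - 1)⁻¹ := by
    push_cast; ring
  rw [sigmix, hs, hw]
  have hsq : ((2:ℂ) ^ m) ^ 2 - 1 = ((2:ℂ) ^ m - 1) * ((2:ℂ) ^ m + 1) := by ring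
  have h1d : (1 : ℂ) + ((2:ℂ) ^ m - 1) = (2:ℂ) ^ m := by ring
  rw [h1d, hsq]
  match_scalars <;> (field_simp; try ring)

/-- weights of the separable decomposition -/
def pJval (m : ℕ) : (((Fin m → Fin 2) → ZMod 4) ⊕ (Fin m → Fin 2)) → ℝ :=
  Sum.elim
    (fun _ => (2:ℝ) ^ m /
      ((Fintype.card ((Fin m → Fin 2) → ZMod 4) : ℝ) * ((2:ℝ) ^ m + 1)))
    (fun _ => 1 / ((2:ℝ) ^ m * ((2:ℝ) ^ m + 1)))

def alJ (m : ℕ) : (((Fin m → Fin 2) → ZMod 4) ⊕ (Fin m → Fin 2)) →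
    Matrix (Fin m → Fin 2) (Fin m → Fin 2) ℂ :=
  Sum.elim (fun a => pureDM (uA a)) (fun z => pureDM (eV z))

def beJ (m : ℕ) : (((Fin m → Fin 2) → ZMod 4) ⊕ (Fin m → Fin 2)) →
    Matrix (Fin m → Fin 2) (Fin m → Fin 2) ℂ :=
  Sum.elim (fun a => pureDM (vB a)) (fun z => pureDM (eV (flipv z)))

lemma pJval_nonneg (j : ((Fin m → Fin 2) → ZMod 4) ⊕ (Fin m → Fin 2)) : 0 ≤ pJval m j := by
  rcases j with a | z <;> simp only [pJval, Sum.elim_inl, Sum.elim_inr] <;> positivity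

lemma alJ_density (j : ((Fin m → Fin 2) → ZMod 4) ⊕ (Fin m → Fin 2)) :
    IsDensityMatrix (alJ m j) := by
  rcases j with a | z
  · exact pureDM_isDensity (uA_unit a)
  · exact pureDM_isDensity (eV_unit z)

lemma beJ_density (j : ((Fin m → Fin 2) → ZMod 4) ⊕ (Fin m → Fin 2)) :
    IsDensityMatrix (beJ m j) := by
  rcases j with a | z
  · exact pureDM_isDensity (vB_unit a)
  · exact pureDM_isDensity (eV_unit (flipv z))

lemma pJval_sum : ∑ j : ((Fin m → Fin 2) → ZMod 4) ⊕ (Fin m → Fin 2), pJval m j = 1 := by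
  rw [Fintype.sum_sum_type]
  simp only [pJval, Sum.elim_inl, Sum.elim_inr, Finset.sum_const, Finset.card_univ,
    nsmul_eq_mul]
  have hN : (0:ℝ) < (Fintype.card ((Fin m → Fin 2) → ZMod 4) : ℝ) := by
    exact_mod_cast Fintype.card_pos (α := (Fin m → Fin 2) → ZMod 4)
  have hD : (0:ℝ) < 2 ^ m := by positivity
  have hI : ((Fintype.card (Fin m → Fin 2)) : ℝ) = 2 ^ m := by
    rw [Fintype.card_fun, Fintype.card_fin, Fintype.card_fin]
    push_cast
    ring
  rw [hI]
  field_simp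

lemma hcardA4 : ((Fintype.card ((Fin m → Fin 2) → ZMod 4) : ℝ) : ℂ)
    = (4:ℂ) ^ (Fintype.card (Fin m → Fin 2)) := by
  rw [Fintype.card_fun, ZMod.card]
  push_cast
  norm_num

lemma decomp_eq (hm : 1 ≤ m) :
    ((2:ℂ) ^ m * ((2:ℂ) ^ m + 1))⁻¹ •
        ((1 : Matrix ((Fin m → Fin 2) × (Fin m → Fin 2))
          ((Fin m → Fin 2) × (Fin m → Fin 2)) ℂ) + ((2:ℂ) ^ m) • pureDM (bigPsi m))
      = ∑ j : ((Fin m → Fin 2) → ZMod 4) ⊕ (Fin m → Fin 2),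
          ((pJval m j : ℝ) : ℂ) • (alJ m j ⊗ₖ beJ m j) := by
  obtain ⟨hd0, hd1, hdm1⟩ := cast_d_facts (m := m) hm
  rw [key_identity, Fintype.sum_sum_type]
  simp only [pJval, alJ, beJ, Sum.elim_inl, Sum.elim_inr]
  rw [smul_add, Finset.smul_sum, Finset.smul_sum]
  congr 1
  · refine Finset.sum_congr rfl fun a _ => ?_
    rw [smul_smul]
    congr 1
    have hNne : ((4:ℂ)) ^ (Fintype.card (Fin m → Fin 2)) ≠ 0 := by positivity
    rw [show (((2:ℝ) ^ m / ((Fintype.card ((Fin m → Fin 2) → ZMod 4) : ℝ) *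
        ((2:ℝ) ^ m + 1)) : ℝ) : ℂ)
        = (2:ℂ) ^ m / (((Fintype.card ((Fin m → Fin 2) → ZMod 4) : ℝ) : ℂ) *
          ((2:ℂ) ^ m + 1)) from by push_cast; ring, hcardA4]
    field_simp
  · refine Finset.sum_congr rfl fun z _ => ?_
    rw [show (((1 / ((2:ℝ) ^ m * ((2:ℝ) ^ m + 1)) : ℝ)) : ℂ)
        = 1 / ((2:ℂ) ^ m * ((2:ℂ) ^ m + 1)) from by push_cast; ring]
    rw [one_div]

lemma isSep_tau (hm : 1 ≤ m) :
    IsSep ((1 + (((2:ℝ) ^ m - 1 : ℝ) : ℂ))⁻¹ •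
      (pureDM (bigPsi m) + (((2:ℝ) ^ m - 1 : ℝ) : ℂ) • sigmix m)) := by
  classical
  refine ⟨Fintype.card (((Fin m → Fin 2) → ZMod 4) ⊕ (Fin m → Fin 2)),
    fun i => pJval m ((Fintype.equivFin _).symm i),
    fun i => alJ m ((Fintype.equivFin _).symm i),
    fun i => beJ m ((Fintype.equivFin _).symm i),
    fun i => pJval_nonneg _, ?_, fun i => alJ_density _, fun i => beJ_density _, ?_⟩
  · rw [Equiv.sum_comp (Fintype.equivFin _).symm (pJval m)]
    exact pJval_sum
  · rw [tau_eq hm, decomp_eq hm]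
    exact (Equiv.sum_comp (Fintype.equivFin _).symm
      (fun j => ((pJval m j : ℝ) : ℂ) • (alJ m j ⊗ₖ beJ m j))).symm

end FinalAssembly
end Aux

/-- The generalized robustness of entanglement of `m` copies of
the singlet equals `2^m − 1` (Alice's `m` qubits versus Bob's `m` qubits). -/
theorem robustness_of_singlets (m : ℕ) (hm : 1 ≤ m) :
    genRobustness (kronPowBip singletDM m) = (2 : ℝ) ^ m - 1 := by
  rw [kronPow_singlet_eq, genRobustness]
  have h2 : (2:ℝ) ≤ 2 ^ m := two_pow_le hm
  have hmem : ((2:ℝ) ^ m - 1) ∈ {s : ℝ | 0 ≤ s ∧ ∃ σ, IsDensityMatrix σ ∧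
      IsSep ((1 + (s : ℂ))⁻¹ • (pureDM (bigPsi m) + (s : ℂ) • σ))} := by
    refine ⟨by linarith, sigmix m, sigmix_density hm, ?_⟩
    exact isSep_tau hm
  have hlb : ∀ s ∈ {s : ℝ | 0 ≤ s ∧ ∃ σ, IsDensityMatrix σ ∧
      IsSep ((1 + (s : ℂ))⁻¹ • (pureDM (bigPsi m) + (s : ℂ) • σ))}, (2:ℝ) ^ m - 1 ≤ s := by
    rintro s ⟨hs0, σ, hσ, hsep⟩
    exact lower_bound hs0 hσ hsep
  exact le_antisymm (csInf_le ⟨(2:ℝ) ^ m - 1, hlb⟩ hmem) (le_csInf ⟨_, hmem⟩ hlb)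

end QIT
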